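/- For every integer p, the element m^(2*|p|) * h(p) of K lies in the image of the polynomial ring ℤ[m, x] under the canonical embedding into its fraction field K; in particular each h(p) is a Laurent polynomial in m with coefficients in ℤ[x], i.e. h(p) ∈ ℤ[m^{±1}, x]. -/

import Mathlib

set_option synthInstance.maxHeartbeats 400000
set_option maxHeartbeats 1000000

noncomputable section
open MvPolynomial

/-- `R = ℤ[m, x]`, the polynomial ring in two variables over `ℤ`. -/
abbrev Rmx : Type := MvPolynomial (Fin 2) ℤ

/-- `K`, the fraction field of `ℤ[m, x]`. -/
abbrev Kmx : Type := FractionRing Rmx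

/-- The variable `m`. -/
def mK : Kmx := algebraMap Rmx Kmx (X 0)

/-- The variable `x`. -/
def xK : Kmx := algebraMap Rmx Kmx (X 1)

/-- `a = m⁴ - x m⁴ + x² m² + m² + 1 - x`. -/
def aK : Kmx := mK ^ 4 - xK * mK ^ 4 + xK ^ 2 * mK ^ 2 + mK ^ 2 + 1 - xK

/-- `b = m⁴ - x m² + 1`. -/
def bK : Kmx := mK ^ 4 - xK * mK ^ 2 + 1

lemma mK_ne_zero : mK ≠ 0 := by
  have : Function.Injective (algebraMap Rmx Kmx) :=
    IsFractionRing.injective Rmx Kmx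
  intro hc
  have : (X 0 : Rmx) = 0 := by
    apply this
    simpa [mK] using hc
  exact MvPolynomial.X_ne_zero _ this

/-- The claim in Theorem 2.2 that `h_p(m, x) ∈ ℤ[m^{±1}, x]`: for every integer `p`,
`m^(2|p|) h(p)` lies in the image of `ℤ[m, x]` in its fraction field. -/
theorem stmt_15 (h : ℤ → Kmx) (h0 : h 0 = 1) (h1 : h 1 = bK / mK ^ 2)
    (hrec : ∀ p : ℤ, h p = (aK / mK ^ 2) * h (p - 1) - h (p - 2)) :
    ∀ p : ℤ, mK ^ (2 * |p|) * h p ∈ Set.range (algebraMap Rmx Kmx) := by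
  set S : Subring Kmx := (algebraMap Rmx Kmx).range with hS
  have hrange : (Set.range (algebraMap Rmx Kmx)) = (S : Set Kmx) := rfl
  have hmS : mK ∈ S := ⟨X 0, rfl⟩
  have hxS : xK ∈ S := ⟨X 1, rfl⟩
  have haS : aK ∈ S := by
    unfold aK
    exact sub_mem (add_mem (add_mem (add_mem (sub_mem (pow_mem hmS 4)
      (mul_mem hxS (pow_mem hmS 4))) (mul_mem (pow_mem hxS 2) (pow_mem hmS 2)))
      (pow_mem hmS 2)) (one_mem S)) hxS
  have hbS : bK ∈ S := by
    unfold bK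
    exact add_mem (sub_mem (pow_mem hmS 4) (mul_mem hxS (pow_mem hmS 2))) (one_mem S)
  have hm : mK ≠ 0 := mK_ne_zero
  have key : ∀ n : ℕ, mK ^ (2 * n) * h (n : ℤ) ∈ S ∧ mK ^ (2 * n) * h (-(n : ℤ)) ∈ S := by
    intro n
    induction n using Nat.twoStepInduction with
    | zero => simpa [h0] using one_mem S
    | one =>
      constructor
      · have : mK ^ (2 * 1) * h 1 = bK := by
          rw [h1]; field_simp; ring
        simpa [this] using hbS
      · have hA := hrec 1
        rw [show (1:ℤ) - 2 = -1 by norm_num, show (1:ℤ) - 1 = 0 by norm_num, h0, h1] at hA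
        have hm1 : h (-1) = aK / mK ^ 2 - bK / mK ^ 2 := by linear_combination hA
        have : mK ^ (2 * 1) * h (-1) = aK - bK := by
          rw [hm1]; field_simp
        simpa [this] using sub_mem haS hbS
    | more n ih ih1 =>
      constructor
      · have hr := hrec ((n : ℤ) + 2)
        have e1 : ((n : ℤ) + 2) - 1 = (n : ℤ) + 1 := by ring
        have e2 : ((n : ℤ) + 2) - 2 = (n : ℤ) := by ring
        rw [e1, e2] at hr
        have heq : mK ^ (2 * (n + 2)) * h ((n : ℤ) + 2)
            = aK * (mK ^ (2 * (n + 1)) * h ((n : ℤ) + 1)) - mK ^ 4 * (mK ^ (2 * n) * h (n : ℤ)) := by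
          rw [hr]; field_simp; ring
        have : ((n + 2 : ℕ) : ℤ) = (n : ℤ) + 2 := by push_cast; ring
        rw [this, heq]
        have : ((n + 1 : ℕ) : ℤ) = (n : ℤ) + 1 := by push_cast; ring
        rw [this] at ih1
        exact sub_mem (mul_mem haS ih1.1) (mul_mem (pow_mem hmS 4) ih.1)
      · have hr := hrec (-(n : ℤ))
        have e1 : (-(n : ℤ)) - 1 = -((n : ℤ) + 1) := by ring
        have e2 : (-(n : ℤ)) - 2 = -((n : ℤ) + 2) := by ring
        rw [e1, e2] at hr
        have hr' : h (-((n : ℤ) + 2)) = (aK / mK ^ 2) * h (-((n : ℤ) + 1)) - h (-(n : ℤ)) := by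
          linear_combination hr
        have heq : mK ^ (2 * (n + 2)) * h (-((n : ℤ) + 2))
            = aK * (mK ^ (2 * (n + 1)) * h (-((n : ℤ) + 1))) - mK ^ 4 * (mK ^ (2 * n) * h (-(n : ℤ))) := by
          rw [hr']; field_simp; ring
        have : (-((n + 2 : ℕ) : ℤ)) = -((n : ℤ) + 2) := by push_cast; ring
        rw [this, heq]
        have : (-((n + 1 : ℕ) : ℤ)) = -((n : ℤ) + 1) := by push_cast; ring
        rw [this] at ih1
        exact sub_mem (mul_mem haS ih1.2) (mul_mem (pow_mem hmS 4) ih.2)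
  intro p
  rw [hrange]
  have habs : |p| = (p.natAbs : ℤ) := Int.abs_eq_natAbs p
  have hpow : mK ^ (2 * |p|) = mK ^ (2 * p.natAbs) := by
    rw [habs]
    rw [show (2 : ℤ) * (p.natAbs : ℤ) = ((2 * p.natAbs : ℕ) : ℤ) by push_cast; ring]
    exact zpow_natCast mK _
  rw [hpow]
  rcases Int.natAbs_eq p with hp | hp
  · have := (key p.natAbs).1; rw [← hp] at this; exact this
  · have := (key p.natAbs).2; rw [← hp] at this; exact this
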